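/- Convexity of integer trace powers on positive semidefinite matrices. Let d be a finite nonempty type and n : ℕ with 1 ≤ n. For all positive semidefinite A, B ∈ Matrix d d ℂ and all t ∈ [0,1], (((t • A + (1 − t) • B) ^ n).trace).re ≤ t * ((A ^ n).trace).re + (1 − t) * ((B ^ n).trace).re. -/

import Mathlib

open Matrix ComplexOrder Finset

section Helpers

variable {d : Type*} [Fintype d] [DecidableEq d]

private lemma entry_re (W : Matrix d d ℂ) (f : d → ℝ) (i : d) :
    ((star W * Matrix.diagonal (Complex.ofReal ∘ f) * W) i i).re
      = ∑ j, f j * Complex.normSq (W j i) := by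
  rw [Matrix.mul_apply, Complex.re_sum]
  refine Finset.sum_congr rfl fun j _ => ?_
  rw [Matrix.mul_diagonal]
  have : (star W) i j * (Complex.ofReal ∘ f) j * W j i
      = Complex.ofReal (f j * Complex.normSq (W j i)) := by
    simp only [Matrix.star_apply, Function.comp_apply, Complex.ofReal_mul]
    rw [show (star (W j i)) = (starRingEnd ℂ) (W j i) from rfl,
      Complex.normSq_eq_conj_mul_self]
    ring
  rw [this, Complex.ofReal_re]

private lemma unitary_conj_pow (V : Matrix d d ℂ) (hV : V ∈ Matrix.unitaryGroup d ℂ)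
    (D : Matrix d d ℂ) (n : ℕ) : (V * D * star V) ^ n = V * D ^ n * star V := by
  induction n with
  | zero => simp [Matrix.mem_unitaryGroup_iff.mp hV]
  | succ k ih =>
      have h1 : star V * V = 1 := Matrix.mem_unitaryGroup_iff'.mp hV
      rw [pow_succ, ih, pow_succ]
      calc V * D ^ k * star V * (V * D * star V)
          = V * D ^ k * (star V * V) * (D * star V) := by
            simp only [Matrix.mul_assoc]
        _ = V * (D ^ k * D) * star V := by
            rw [h1]; simp only [Matrix.mul_one, Matrix.mul_assoc]

private lemma sum_normSq_unitary (W : Matrix d d ℂ) (hW : W ∈ Matrix.unitaryGroup d ℂ)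
    (i : d) : ∑ j, Complex.normSq (W j i) = 1 := by
  have h := entry_re W (fun _ => 1) i
  have hd : Matrix.diagonal (Complex.ofReal ∘ fun _ : d => (1 : ℝ)) = 1 := by
    have : (Complex.ofReal ∘ fun _ : d => (1 : ℝ)) = fun _ => (1 : ℂ) := by
      funext j; simp
    rw [this, Matrix.diagonal_one]
  rw [hd, Matrix.mul_one, Matrix.mem_unitaryGroup_iff'.mp hW] at h
  simpa using h.symm

private lemma pow_spectral {C : Matrix d d ℂ} (hC : C.IsHermitian) (n : ℕ) :
    C ^ n = (hC.eigenvectorUnitary : Matrix d d ℂ)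
        * Matrix.diagonal (Complex.ofReal ∘ fun j => hC.eigenvalues j ^ n)
        * star (hC.eigenvectorUnitary : Matrix d d ℂ) := by
  have h1 : C = (hC.eigenvectorUnitary : Matrix d d ℂ)
      * Matrix.diagonal (Complex.ofReal ∘ hC.eigenvalues)
      * star (hC.eigenvectorUnitary : Matrix d d ℂ) := hC.spectral_theorem
  have h2 : (Matrix.diagonal (Complex.ofReal ∘ hC.eigenvalues)) ^ n
      = Matrix.diagonal (Complex.ofReal ∘ fun j => hC.eigenvalues j ^ n) := by
    have hfun : (Complex.ofReal ∘ hC.eigenvalues) ^ n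
        = Complex.ofReal ∘ fun j => hC.eigenvalues j ^ n :=
      funext fun j => by simp [Pi.pow_apply]
    rw [Matrix.diagonal_pow, hfun]
  conv_lhs => rw [h1]
  rw [unitary_conj_pow _ hC.eigenvectorUnitary.2, h2]

private lemma conj_entry {C : Matrix d d ℂ} (hC : C.IsHermitian) (U : Matrix d d ℂ)
    (n : ℕ) (i : d) :
    ((star U * C ^ n * U) i i).re
      = ∑ j, hC.eigenvalues j ^ n
          * Complex.normSq ((star (hC.eigenvectorUnitary : Matrix d d ℂ) * U) j i) := by
  set V := (hC.eigenvectorUnitary : Matrix d d ℂ) with hVdef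
  have key : star U * C ^ n * U
      = star (star V * U)
        * Matrix.diagonal (Complex.ofReal ∘ fun j => hC.eigenvalues j ^ n)
        * (star V * U) := by
    rw [pow_spectral hC n, Matrix.star_mul, star_star]
    simp only [Matrix.mul_assoc]
    rfl
  rw [key, entry_re]

private lemma trace_re_eq_sum (X : Matrix d d ℂ) (U : Matrix d d ℂ)
    (hU : U ∈ Matrix.unitaryGroup d ℂ) :
    (X.trace).re = ∑ i, ((star U * X * U) i i).re := by
  have h : (star U * X * U).trace = X.trace := by
    rw [Matrix.trace_mul_cycle, Matrix.mem_unitaryGroup_iff.mp hU, Matrix.one_mul]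
  rw [← h, Matrix.trace, Complex.re_sum]
  rfl

end Helpers

/-- **Convexity of integer trace powers on positive semidefinite matrices:**
for PSD `A`, `B`, `n ≥ 1` and `t ∈ [0,1]`,
`Re tr ((t•A + (1-t)•B)^n) ≤ t * Re tr (A^n) + (1-t) * Re tr (B^n)`. -/
theorem trace_pow_convex {d : Type*} [Fintype d] [DecidableEq d] [Nonempty d]
    (n : ℕ) (hn : 1 ≤ n)
    (A B : Matrix d d ℂ) (hA : A.PosSemidef) (hB : B.PosSemidef)
    (t : ℝ) (ht0 : 0 ≤ t) (ht1 : t ≤ 1) :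
    (((t • A + (1 - t) • B) ^ n).trace).re ≤
      t * ((A ^ n).trace).re + (1 - t) * ((B ^ n).trace).re := by
  classical
  have ht1' : (0:ℝ) ≤ 1 - t := by linarith
  set M := t • A + (1 - t) • B with hMdef
  have hsm : ∀ (s : ℝ) (C : Matrix d d ℂ), C.IsHermitian → (s • C).IsHermitian := by
    intro s C h
    rw [Matrix.IsHermitian, Matrix.conjTranspose_smul, star_trivial, h.eq]
  have hM : M.IsHermitian := (hsm t A hA.1).add (hsm (1 - t) B hB.1)
  set U := (hM.eigenvectorUnitary : Matrix d d ℂ) with hUdef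
  have hU : U ∈ Matrix.unitaryGroup d ℂ := hM.eigenvectorUnitary.2
  set μ := hM.eigenvalues with hμdef
  -- quadratic forms along the eigenbasis of M
  set a : d → ℝ := fun i => ((star U * A * U) i i).re with hadef
  set b : d → ℝ := fun i => ((star U * B * U) i i).re with hbdef
  -- weight matrices
  set WA := star (hA.1.eigenvectorUnitary : Matrix d d ℂ) * U with hWAdef
  set WB := star (hB.1.eigenvectorUnitary : Matrix d d ℂ) * U with hWBdef
  have hWAmem : WA ∈ Matrix.unitaryGroup d ℂ :=
    mul_mem (Unitary.star_mem hA.1.eigenvectorUnitary.2) hU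
  have hWBmem : WB ∈ Matrix.unitaryGroup d ℂ :=
    mul_mem (Unitary.star_mem hB.1.eigenvectorUnitary.2) hU
  -- representations of a and b
  have haRepr : ∀ i, a i = ∑ j, hA.1.eigenvalues j * Complex.normSq (WA j i) := by
    intro i
    have := conj_entry hA.1 U 1 i
    simpa [pow_one] using this
  have hbRepr : ∀ i, b i = ∑ j, hB.1.eigenvalues j * Complex.normSq (WB j i) := by
    intro i
    have := conj_entry hB.1 U 1 i
    simpa [pow_one] using this
  have ha0 : ∀ i, 0 ≤ a i := fun i => by
    rw [haRepr i]
    exact Finset.sum_nonneg fun j _ =>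
      mul_nonneg (hA.eigenvalues_nonneg j) (Complex.normSq_nonneg _)
  have hb0 : ∀ i, 0 ≤ b i := fun i => by
    rw [hbRepr i]
    exact Finset.sum_nonneg fun j _ =>
      mul_nonneg (hB.eigenvalues_nonneg j) (Complex.normSq_nonneg _)
  -- Jensen: a i ^ n ≤ diagonal entry of A ^ n conjugated
  have hkeyA : ∀ i, a i ^ n ≤ ((star U * A ^ n * U) i i).re := by
    intro i
    rw [conj_entry hA.1 U n i, haRepr i]
    have hsum : ∑ j, Complex.normSq (WA j i) = 1 := sum_normSq_unitary WA hWAmem i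
    have := (convexOn_pow (𝕜 := ℝ) n).map_sum_le
      (t := Finset.univ) (w := fun j => Complex.normSq (WA j i))
      (p := fun j => hA.1.eigenvalues j)
      (fun j _ => Complex.normSq_nonneg _) hsum
      (fun j _ => Set.mem_Ici.mpr (hA.eigenvalues_nonneg j))
    simp only [smul_eq_mul] at this
    calc (∑ j, hA.1.eigenvalues j * Complex.normSq (WA j i)) ^ n
        = (∑ j, Complex.normSq (WA j i) * hA.1.eigenvalues j) ^ n := by
          congr 1; exact Finset.sum_congr rfl fun j _ => mul_comm _ _
      _ ≤ ∑ j, Complex.normSq (WA j i) * hA.1.eigenvalues j ^ n := this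
      _ = ∑ j, hA.1.eigenvalues j ^ n * Complex.normSq (WA j i) :=
          Finset.sum_congr rfl fun j _ => mul_comm _ _
  have hkeyB : ∀ i, b i ^ n ≤ ((star U * B ^ n * U) i i).re := by
    intro i
    rw [conj_entry hB.1 U n i, hbRepr i]
    have hsum : ∑ j, Complex.normSq (WB j i) = 1 := sum_normSq_unitary WB hWBmem i
    have := (convexOn_pow (𝕜 := ℝ) n).map_sum_le
      (t := Finset.univ) (w := fun j => Complex.normSq (WB j i))
      (p := fun j => hB.1.eigenvalues j)
      (fun j _ => Complex.normSq_nonneg _) hsum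
      (fun j _ => Set.mem_Ici.mpr (hB.eigenvalues_nonneg j))
    simp only [smul_eq_mul] at this
    calc (∑ j, hB.1.eigenvalues j * Complex.normSq (WB j i)) ^ n
        = (∑ j, Complex.normSq (WB j i) * hB.1.eigenvalues j) ^ n := by
          congr 1; exact Finset.sum_congr rfl fun j _ => mul_comm _ _
      _ ≤ ∑ j, Complex.normSq (WB j i) * hB.1.eigenvalues j ^ n := this
      _ = ∑ j, hB.1.eigenvalues j ^ n * Complex.normSq (WB j i) :=
          Finset.sum_congr rfl fun j _ => mul_comm _ _
  -- eigenvalues of M as convex combination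
  have hμeq : ∀ i, μ i = t * a i + (1 - t) * b i := by
    intro i
    have hdiag : star U * M * U = Matrix.diagonal (Complex.ofReal ∘ μ) := by
      have := hM.conjStarAlgAut_star_eigenvectorUnitary
      rw [Unitary.conjStarAlgAut_apply, Unitary.coe_star, star_star] at this
      exact this
    have h1 : ((star U * M * U) i i).re = μ i := by
      rw [hdiag]
      simp [Matrix.diagonal_apply_eq]
    have h2 : star U * M * U = t • (star U * A * U) + (1 - t) • (star U * B * U) := by
      rw [hMdef]
      simp only [Matrix.mul_add, Matrix.add_mul, Matrix.mul_smul, Matrix.smul_mul]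
    rw [← h1, h2]
    simp [Matrix.add_apply, Matrix.smul_apply, Complex.add_re, Complex.smul_re]
    rfl
  -- convexity of x^n pointwise
  have hconv : ∀ i, μ i ^ n ≤ t * a i ^ n + (1 - t) * b i ^ n := by
    intro i
    have := (convexOn_pow (𝕜 := ℝ) n).2 (Set.mem_Ici.mpr (ha0 i))
      (Set.mem_Ici.mpr (hb0 i)) ht0 ht1' (by ring)
    simpa [smul_eq_mul, hμeq i] using this
  -- trace of M ^ n as sum of eigenvalue powers
  have htrM : ((M ^ n).trace).re = ∑ i, μ i ^ n := by
    have h := pow_spectral hM n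
    rw [h, Matrix.trace_mul_cycle, ← hUdef,
      Matrix.mem_unitaryGroup_iff'.mp hU, Matrix.one_mul, Matrix.trace_diagonal,
      Complex.re_sum]
    refine Finset.sum_congr rfl fun i _ => ?_
    simp only [Function.comp_apply, Complex.ofReal_re]
    rfl
  -- put everything together
  rw [htrM, trace_re_eq_sum (A ^ n) U hU, trace_re_eq_sum (B ^ n) U hU,
    Finset.mul_sum, Finset.mul_sum, ← Finset.sum_add_distrib]
  refine Finset.sum_le_sum fun i _ => ?_
  calc μ i ^ n ≤ t * a i ^ n + (1 - t) * b i ^ n := hconv i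
    _ ≤ t * ((star U * A ^ n * U) i i).re + (1 - t) * ((star U * B ^ n * U) i i).re := by
        gcongr
        · exact hkeyA i
        · exact hkeyB i
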